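/- For all integers m ≥ 1 and 0 ≤ l ≤ m, one has C(2m, m+l) = Σ_{k=0}^{m−l} C(2m−(k+l)−1, m−1) · C(k+l, l), where C(p,q) denotes the binomial coefficient. -/
import Mathlib

lemma choose_conv (n a b : ℕ) :
    ∑ j ∈ Finset.range (n + 1), j.choose a * (n - j).choose b =
      (n + 1).choose (a + b + 1) := by
  induction n generalizing b with
  | zero => cases a <;> cases b <;> simp [Nat.choose]
  | succ n ih =>
    cases b with
    | zero =>
      have h1 : ∑ j ∈ Finset.Icc a (n + 1), j.choose a =
          ∑ j ∈ Finset.range (n + 2), j.choose a := by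
        apply Finset.sum_subset
        · intro j hj; simp only [Finset.mem_Icc] at hj; simp; omega
        · intro j hj1 hj2
          simp only [Finset.mem_Icc, Finset.mem_range] at *
          exact Nat.choose_eq_zero_of_lt (by omega)
      simpa [Nat.sum_Icc_choose] using h1.symm
    | succ b =>
      rw [Finset.sum_range_succ]
      have hsplit : ∀ j ∈ Finset.range (n + 1),
          j.choose a * (n + 1 - j).choose (b + 1) =
            j.choose a * (n - j).choose b + j.choose a * (n - j).choose (b + 1) := by
        intro j hj
        simp only [Finset.mem_range] at hj
        rw [show n + 1 - j = (n - j) + 1 by omega, Nat.choose_succ_succ, Nat.mul_add]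
      rw [Finset.sum_congr rfl hsplit, Finset.sum_add_distrib, ih b, ih (b + 1)]
      rw [Nat.sub_self, Nat.choose_eq_zero_of_lt (Nat.succ_pos b), Nat.mul_zero, Nat.add_zero]
      rw [show a + (b + 1) + 1 = (a + b + 1) + 1 by ring, Nat.choose_succ_succ (n + 1)]

/-- The Vandermonde-type identity
`C(2m, m+l) = ∑_{k=0}^{m-l} C(2m-(k+l)-1, m-1) * C(k+l, l)`. -/
theorem vandermonde_identity_proj (m l : ℕ) (hm : 1 ≤ m) (hl : l ≤ m) :
    (2 * m).choose (m + l) =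
      ∑ k ∈ Finset.range (m - l + 1),
        (2 * m - (k + l) - 1).choose (m - 1) * (k + l).choose l := by
  have key := choose_conv (2 * m - 1) l (m - 1)
  rw [show 2 * m - 1 + 1 = 2 * m by omega,
    show l + (m - 1) + 1 = m + l by omega] at key
  rw [← key]
  have h2 : ∑ j ∈ Finset.range (2 * m), j.choose l * (2 * m - 1 - j).choose (m - 1) =
      ∑ j ∈ Finset.Ico l (m + 1), j.choose l * (2 * m - 1 - j).choose (m - 1) := by
    symm
    apply Finset.sum_subset
    · intro j hj; simp only [Finset.mem_Ico] at hj; simp; omega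
    · intro j hj1 hj2
      simp only [Finset.mem_Ico, Finset.mem_range] at *
      rcases lt_or_ge j l with h | h
      · rw [Nat.choose_eq_zero_of_lt h, Nat.zero_mul]
      · rw [Nat.choose_eq_zero_of_lt (by omega : 2 * m - 1 - j < m - 1), Nat.mul_zero]
  rw [h2, Finset.sum_Ico_eq_sum_range]
  rw [show m + 1 - l = m - l + 1 by omega]
  apply Finset.sum_congr rfl
  intro k hk
  rw [show l + k = k + l by ring, show 2 * m - 1 - (k + l) = 2 * m - (k + l) - 1 by omega]
  ring
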